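/- Let λ₄, λ₆, λ₈ ∈ ℂ and let U : ℝ → ℂ be a four-times differentiable function satisfying U'''' = 10UU'' + 5(U')² − 10U³ − 8λ₄U + 16λ₆ together with the first-integral relation U'U''' − ½(U'')² − 5U(U')² + (5/2)U⁴ + 4λ₄U² − 16λ₆U + 8λ₄² − 32λ₈ = 0. Then the function E₂ = (U''')² − 10U(U'')² + 2(U')²U'' + 4(5U³ + 4λ₄U − 8λ₆)U'' − 2(15U² + 4λ₄)(U')² + 6U⁵ + 16λ₄U³ − 96λ₆U² + 96(λ₄² − 4λ₈)U has identically vanishing derivative, i.e. E₂ is constant along U. -/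

import Mathlib

private lemma aux_pow {f : ℝ → ℂ} {f' : ℂ} {x : ℝ} (hf : HasDerivAt f f' x) (n : ℕ) :
    HasDerivAt (fun y => f y ^ n) ((n : ℂ) * f x ^ (n - 1) * f') x := by
  induction n with
  | zero => simpa using hasDerivAt_const x (1 : ℂ)
  | succ n ih =>
    have h := ih.mul hf
    simp only [pow_succ]
    convert h using 1
    · rfl
    · rfl
    cases n with
    | zero => simp
    | succ m =>
      simp only [Nat.add_sub_cancel, Nat.succ_sub_one]
      push_cast
      ring

/-- If a four-times differentiable `U : ℝ → ℂ` satisfies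
`U'''' = 10UU'' + 5(U')² − 10U³ − 8λ₄U + 16λ₆` and the first-integral relation
`U'U''' − ½(U'')² − 5U(U')² + (5/2)U⁴ + 4λ₄U² − 16λ₆U + 8λ₄² − 32λ₈ = 0`, then
`E₂ = (U''')² − 10U(U'')² + 2(U')²U'' + 4(5U³ + 4λ₄U − 8λ₆)U'' − 2(15U² + 4λ₄)(U')²`
`+ 6U⁵ + 16λ₄U³ − 96λ₆U² + 96(λ₄² − 4λ₈)U` has identically vanishing derivative. -/
theorem first_integral_E2 (lam4 lam6 lam8 : ℂ) (U : ℝ → ℂ)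
    (hU : ContDiff ℝ 4 U)
    (h : ∀ t, iteratedDeriv 4 U t = 10 * U t * iteratedDeriv 2 U t
      + 5 * (deriv U t) ^ 2 - 10 * (U t) ^ 3 - 8 * lam4 * U t + 16 * lam6)
    (hE1 : ∀ t, deriv U t * iteratedDeriv 3 U t - 1/2 * (iteratedDeriv 2 U t) ^ 2
      - 5 * U t * (deriv U t) ^ 2 + 5/2 * (U t) ^ 4 + 4 * lam4 * (U t) ^ 2
      - 16 * lam6 * U t + 8 * lam4 ^ 2 - 32 * lam8 = 0) :
    ∀ t, deriv (fun t => (iteratedDeriv 3 U t) ^ 2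
      - 10 * U t * (iteratedDeriv 2 U t) ^ 2
      + 2 * (deriv U t) ^ 2 * iteratedDeriv 2 U t
      + 4 * (5 * (U t) ^ 3 + 4 * lam4 * U t - 8 * lam6) * iteratedDeriv 2 U t
      - 2 * (15 * (U t) ^ 2 + 4 * lam4) * (deriv U t) ^ 2
      + 6 * (U t) ^ 5 + 16 * lam4 * (U t) ^ 3 - 96 * lam6 * (U t) ^ 2
      + 96 * (lam4 ^ 2 - 4 * lam8) * U t) t = 0 := by
  intro t
  have key : ∀ n : ℕ, n < 4 → HasDerivAt (iteratedDeriv n U) (iteratedDeriv (n + 1) U t) t := by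
    intro n hn
    rw [iteratedDeriv_succ]
    exact ((hU.differentiable_iteratedDeriv n (by exact_mod_cast hn)) t).hasDerivAt
  have h0 : HasDerivAt U (deriv U t) t := by
    have := key 0 (by norm_num)
    simpa [iteratedDeriv_zero, iteratedDeriv_one] using this
  have h1 : HasDerivAt (deriv U) (iteratedDeriv 2 U t) t := by
    have := key 1 (by norm_num)
    simpa [iteratedDeriv_one] using this
  have h2 : HasDerivAt (iteratedDeriv 2 U) (iteratedDeriv 3 U t) t := key 2 (by norm_num)
  have h3 : HasDerivAt (iteratedDeriv 3 U) (iteratedDeriv 4 U t) t := key 3 (by norm_num)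
  have hE := (((((((((aux_pow h3 2).sub
    ((h0.const_mul (10 : ℂ)).mul (aux_pow h2 2))).add
    (((aux_pow h1 2).const_mul (2 : ℂ)).mul h2)).add
    (((((((aux_pow h0 3).const_mul (5 : ℂ)).add
      (h0.const_mul (4 * lam4))).sub_const (8 * lam6)).const_mul (4 : ℂ)).mul h2))).sub
    (((((aux_pow h0 2).const_mul (15 : ℂ)).add_const (4 * lam4)).const_mul (2 : ℂ)).mul
      (aux_pow h1 2))).add
    ((aux_pow h0 5).const_mul (6 : ℂ))).add
    ((aux_pow h0 3).const_mul (16 * lam4))).sub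
    ((aux_pow h0 2).const_mul (96 * lam6))).add
    (h0.const_mul (96 * (lam4 ^ 2 - 4 * lam8))))
  refine Eq.trans hE.deriv ?_
  simp only [Pi.add_apply]
  linear_combination (2 * iteratedDeriv 3 U t) * h t + (12 * deriv U t) * hE1 t
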